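/- The lex-polyhedron P^lex is nonempty if and only if the max-front polyhedron P^{f⋆} is nonempty. -/
import Mathlib


/-- The equality constraints `A x + s = b` of a lex-polyhedron in standard form,
with slack blocks `s i j` for `i ∈ [m]` and `1 ≤ j ≤ d i`. -/
def satEq (m N : ℕ) (d : Fin m → ℕ) (A : Fin m → ℕ → Fin N → ℝ)
    (b : Fin m → ℕ → ℝ) (p : (Fin N → ℝ) × (Fin m → ℕ → ℝ)) : Prop :=
  ∀ i : Fin m, ∀ j : ℕ, 1 ≤ j → j ≤ d i →
    (∑ k, A i j k * p.1 k) + p.2 i j = b i j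

/-- Lexicographic nonnegativity of the block `(v 1, …, v dI)`. -/
def lexNonneg (dI : ℕ) (v : ℕ → ℝ) : Prop :=
  (∀ j, 1 ≤ j → j ≤ dI → v j = 0) ∨
    ∃ j, 1 ≤ j ∧ j ≤ dI ∧ (∀ k, 1 ≤ k → k < j → v k = 0) ∧ 0 < v j

/-- The lex-polyhedron `P^lex` in standard form. -/
def Plex (m N : ℕ) (d : Fin m → ℕ) (A : Fin m → ℕ → Fin N → ℝ)
    (b : Fin m → ℕ → ℝ) : Set ((Fin N → ℝ) × (Fin m → ℕ → ℝ)) :=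
  {p | satEq m N d A b p ∧ ∀ i, lexNonneg (d i) (p.2 i)}

/-- A front is a vector `f` with `f i ∈ {1, …, d i + 1}` for each `i`. -/
def IsFront (m : ℕ) (d : Fin m → ℕ) (f : Fin m → ℕ) : Prop :=
  ∀ i, 1 ≤ f i ∧ f i ≤ d i + 1

/-- The closed convex polyhedron `P^f` associated with a front `f`. -/
def Pfront (m N : ℕ) (d : Fin m → ℕ) (A : Fin m → ℕ → Fin N → ℝ)
    (b : Fin m → ℕ → ℝ) (f : Fin m → ℕ) :
    Set ((Fin N → ℝ) × (Fin m → ℕ → ℝ)) :=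
  {p | satEq m N d A b p ∧ (∀ i, ∀ j, 1 ≤ j → j < f i → p.2 i j = 0) ∧
    (∀ i, f i ≤ d i → 0 ≤ p.2 i (f i))}

/-- The lex-polyhedron `P^lex` is nonempty iff the max-front polyhedron
`P^{f⋆}` is nonempty. -/
theorem Plex_nonempty_iff_maxFront_nonempty (m N : ℕ) (d : Fin m → ℕ)
    (hd : ∀ i, 1 ≤ d i) (A : Fin m → ℕ → Fin N → ℝ) (b : Fin m → ℕ → ℝ)
    (fstar : Fin m → ℕ)
    (hstar : ∀ i, IsGreatest
      {j | 1 ≤ j ∧ j ≤ d i + 1 ∧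
        ∀ p ∈ Plex m N d A b, ∀ k, 1 ≤ k → k < j → p.2 i k = 0}
      (fstar i)) :
    (Plex m N d A b).Nonempty ↔ (Pfront m N d A b fstar).Nonempty := by
  constructor
  · rintro ⟨p, hp⟩
    refine ⟨p, hp.1, ?_, ?_⟩
    · intro i j hj1 hjf
      exact (hstar i).1.2.2 p hp j hj1 hjf
    · intro i hfi
      rcases hp.2 i with hz | ⟨j, hj1, hjd, hzk, hpos⟩
      · exact le_of_eq (hz (fstar i) (hstar i).1.1 hfi).symm
      · rcases lt_trichotomy j (fstar i) with h | h | h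
        · exact absurd ((hstar i).1.2.2 p hp j hj1 h) (ne_of_gt hpos)
        · exact le_of_lt (h ▸ hpos)
        · exact le_of_eq (hzk (fstar i) (hstar i).1.1 h).symm
  · rintro ⟨p, hp⟩
    by_cases hne : (Plex m N d A b).Nonempty
    · exact hne
    · -- Plex is empty, so fstar i = d i + 1 for all i
      have hfs : ∀ i, fstar i = d i + 1 := by
        intro i
        have hmem : (d i + 1) ∈ {j | 1 ≤ j ∧ j ≤ d i + 1 ∧
            ∀ q ∈ Plex m N d A b, ∀ k, 1 ≤ k → k < j → q.2 i k = 0} := by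
          refine ⟨Nat.le_add_left 1 (d i), le_refl _, ?_⟩
          intro q hq
          exact absurd ⟨q, hq⟩ hne
        exact le_antisymm (hstar i).1.2.1 ((hstar i).2 hmem)
      refine ⟨p, hp.1, ?_⟩
      intro i
      left
      intro j hj1 hjd
      exact hp.2.1 i j hj1 (by have := hfs i; omega)
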